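/- Let V be a topological vector space over a field k that is linearly compact (every family of closed affine subspaces with empty intersection has a finite subfamily with empty intersection). If V has the discrete topology, then V is finite dimensional over k. -/

import Mathlib

open Pointwise

/-- A linearly compact topological vector space with the discrete topology
is finite dimensional. -/
theorem stmt_0 (k V : Type) [Field k] [AddCommGroup V] [Module k V]
    [TopologicalSpace V] [DiscreteTopology V]
    (hlc : ∀ (ι : Type) (W : ι → Submodule k V) (v : ι → V),
      (∀ i, IsClosed ((v i) +ᵥ (W i : Set V))) →
      (⋂ i, ((v i) +ᵥ (W i : Set V))) = ∅ →
      ∃ s : Finset ι, (⋂ i ∈ s, ((v i) +ᵥ (W i : Set V))) = ∅) :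
    FiniteDimensional k V := by
  classical
  by_contra hfd
  set b := Module.Basis.ofVectorSpace k V with hb
  have hinf : Infinite (Module.Basis.ofVectorSpaceIndex k V) := by
    rw [Set.infinite_coe_iff]
    intro hfin
    have : Finite (Module.Basis.ofVectorSpaceIndex k V) := hfin.to_subtype
    exact hfd (FiniteDimensional.of_finite_basis b hfin)
  let f : ℕ ↪ Module.Basis.ofVectorSpaceIndex k V := Infinite.natEmbedding _
  let W : ℕ → Submodule k V := fun n =>
    Submodule.span k (b '' {i | ∀ j < n, f j ≠ i})
  let v : ℕ → V := fun n => ∑ j ∈ Finset.range n, b (f j)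
  -- membership in the coset
  have hmem : ∀ (n : ℕ) (x : V), x ∈ (v n) +ᵥ (W n : Set V) ↔ x - v n ∈ W n := by
    intro n x
    rw [Set.mem_vadd_set_iff_neg_vadd_mem, vadd_eq_add, neg_add_eq_sub]
    rfl
  -- repr of v n
  have hreprv : ∀ n j, j < n → b.repr (v n) (f j) = 1 := by
    intro n j hj
    have : b.repr (v n) = ∑ j' ∈ Finset.range n, Finsupp.single (f j') 1 := by
      simp [v, map_sum, Module.Basis.repr_self]
    rw [this, Finsupp.finset_sum_apply, Finset.sum_eq_single j]
    · simp
    · intro j' _ hne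
      rw [Finsupp.single_apply, if_neg (fun h => hne (f.injective h))]
    · exact fun h => absurd (Finset.mem_range.2 hj) h
  have hreprW : ∀ n (w : V), w ∈ W n → ∀ j < n, b.repr w (f j) = 0 := by
    intro n w hw j hj
    have hsupp := b.mem_span_image.1 hw
    by_contra hne
    have : f j ∈ (b.repr w).support := Finsupp.mem_support_iff.2 hne
    exact (hsupp this) j hj rfl
  have hempty : (⋂ i, ((v i) +ᵥ (W i : Set V))) = ∅ := by
    rw [Set.eq_empty_iff_forall_notMem]
    intro x hx
    have h1 : ∀ j : ℕ, b.repr x (f j) = 1 := by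
      intro j
      have hxm := (hmem (j+1) x).1 (Set.mem_iInter.1 hx (j+1))
      have h0 := hreprW (j+1) _ hxm j (Nat.lt_succ_self j)
      have heq : b.repr (x - v (j+1)) (f j)
          = b.repr x (f j) - b.repr (v (j+1)) (f j) := by simp
      rw [heq, hreprv (j+1) j (Nat.lt_succ_self j)] at h0
      exact sub_eq_zero.1 h0
    have hsub : Set.range (fun j => f j) ⊆ ((b.repr x).support : Set _) := by
      rintro _ ⟨j, rfl⟩
      exact Finsupp.mem_support_iff.2 (by rw [h1 j]; exact one_ne_zero)
    have hinf2 : (Set.range (fun j => (f j : Module.Basis.ofVectorSpaceIndex k V))).Infinite :=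
      Set.infinite_range_of_injective f.injective
    exact hinf2 (Set.Finite.subset (Finset.finite_toSet _) hsub)
  obtain ⟨s, hs⟩ := hlc ℕ W v (fun i => isClosed_discrete _) hempty
  have hN : ∀ n ∈ s, v (s.sup id + 1) ∈ (v n) +ᵥ (W n : Set V) := by
    intro n hn
    rw [hmem]
    have hle : n ≤ s.sup id + 1 := le_trans (Finset.le_sup (f := id) hn) (Nat.le_succ _)
    have : v (s.sup id + 1) - v n = ∑ j ∈ Finset.Ico n (s.sup id + 1), b (f j) :=
      (Finset.sum_Ico_eq_sub _ hle).symm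
    rw [this]
    apply Submodule.sum_mem
    intro j hj
    apply Submodule.subset_span
    refine ⟨f j, ?_, rfl⟩
    intro j' hj' heq
    have hj2 := Finset.mem_Ico.1 hj
    have : j' = j := f.injective heq
    omega
  have h := Set.mem_iInter₂.2 hN
  rw [hs] at h
  exact h
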